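/- Let f ∈ Ω and let z ∈ ℂ with 0 < |z| < 2(1 − e⁻¹)/(2 − e⁻¹). Then f(z) ≠ 0 and |log(z·f'(z)/f(z))| < 1, where log denotes the principal branch of the complex logarithm. (That is, the S*_e-radius for the class Ω is 2(1 − e⁻¹)/(2 − e⁻¹), where S*_e is the class of f with z·f'(z)/f(z) taking values in {w : |log w| < 1}.) -/

import Mathlib

open Complex Metric Filter Topology

/-- The open unit disc in `ℂ`. -/
def unitDisc : Set ℂ := Metric.ball 0 1

/-- `f ∈ 𝒜ₙ`: `f` is analytic on the unit disc with power series
`f(z) = z + ∑_{k=n+1}^∞ a_k z^k`. -/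
def MemA (n : ℕ) (f : ℂ → ℂ) : Prop :=
  DifferentiableOn ℂ f unitDisc ∧
    ∃ a : ℕ → ℂ, ∀ z ∈ unitDisc, f z = z + ∑' k : ℕ, a k * z ^ (n + 1 + k)

/-- `f ∈ Ωₙ`: `f ∈ 𝒜ₙ` and `|z f'(z) - f(z)| < 1/2` on the unit disc. -/
def MemOmega (n : ℕ) (f : ℂ → ℂ) : Prop :=
  MemA n f ∧ ∀ z ∈ unitDisc, ‖z * deriv f z - f z‖ < 1 / 2

lemma aux_log_lt_one {u : ℂ} (h : ‖u‖ < 1 - (Real.exp 1)⁻¹) :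
    ‖Complex.log (1 + u)‖ < 1 := by
  have he0 : (0:ℝ) < (Real.exp 1)⁻¹ := inv_pos.mpr (Real.exp_pos 1)
  have hu1 : ‖u‖ < 1 := by linarith
  have hs := Complex.hasSum_taylorSeries_log hu1
  have habs : |‖u‖| < 1 := by rw [_root_.abs_of_nonneg (norm_nonneg u)]; exact hu1
  have hr0 := Real.hasSum_pow_div_log_of_abs_lt_one habs
  have hr : HasSum (fun n : ℕ => ‖u‖ ^ n / n) (-Real.log (1 - ‖u‖)) := by
    rw [← hasSum_nat_add_iff' 1]
    simpa using hr0
  have hle : ‖Complex.log (1 + u)‖ ≤ -Real.log (1 - ‖u‖) := by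
    rw [← hs.tsum_eq]
    refine tsum_of_norm_bounded hr (fun n => le_of_eq ?_)
    simp [norm_div, norm_mul, norm_pow]
  have hlog : (-1:ℝ) < Real.log (1 - ‖u‖) := by
    have h1 : Real.exp (-1) < 1 - ‖u‖ := by rw [Real.exp_neg]; linarith
    calc (-1:ℝ) = Real.log (Real.exp (-1)) := (Real.log_exp _).symm
      _ < Real.log (1 - ‖u‖) := Real.log_lt_log (Real.exp_pos _) h1
  linarith

lemma aux_deriv (f : ℂ → ℂ) (a : ℕ → ℂ)
    (h : ∀ z ∈ ball (0:ℂ) 1, f z = z + ∑' k : ℕ, a k * z ^ (1 + 1 + k)) :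
    f 0 = 0 ∧ HasDerivAt f 1 0 := by
  have h0 : f 0 = 0 := by
    have h0' := h 0 (mem_ball_self one_pos)
    have hz : ∀ k : ℕ, a k * (0:ℂ) ^ (1 + 1 + k) = 0 := fun k => by
      rw [zero_pow (by omega), mul_zero]
    rw [h0', tsum_congr hz, tsum_zero, add_zero]
  have key : HasDerivAt (fun ζ => f ζ - ζ) 0 0 := by
    by_cases hs : ∃ w : ℂ, w ∈ ball (0:ℂ) 1 ∧ w ≠ 0 ∧
        Summable (fun k => a k * w ^ (1 + 1 + k))
    · obtain ⟨w, hw1, hw0, hsum⟩ := hs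
      have hwpos : (0:ℝ) < ‖w‖ := norm_pos_iff.mpr hw0
      have hsumn : Summable (fun k => ‖a k * w ^ (1 + 1 + k)‖) :=
        summable_norm_iff.mpr hsum
      obtain ⟨M, hM⟩ := hsumn.tendsto_atTop_zero.bddAbove_range
      have hMk : ∀ k : ℕ, ‖a k‖ * ‖w‖ ^ (1 + 1 + k) ≤ M := by
        intro k
        have := hM (Set.mem_range_self k)
        simpa [norm_mul, norm_pow] using this
      have hM0 : 0 ≤ M := le_trans (by positivity) (hMk 0)
      have hb : ∀ ζ : ℂ, ‖ζ‖ ≤ ‖w‖ / 2 → ‖ζ‖ < 1 →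
          ‖f ζ - ζ‖ ≤ (2 * M / ‖w‖ ^ 2) * ‖ζ‖ ^ 2 := by
        intro ζ hζw hζ1
        have hζball : ζ ∈ ball (0:ℂ) 1 := by
          simpa [mem_ball, dist_zero_right] using hζ1
        have hq : ‖ζ‖ / ‖w‖ ≤ 1 / 2 := by
          rw [div_le_div_iff₀ hwpos (by norm_num)]; linarith
        have hq0 : 0 ≤ ‖ζ‖ / ‖w‖ := by positivity
        have heq : f ζ - ζ = ∑' k, a k * ζ ^ (1 + 1 + k) := by
          rw [h ζ hζball]; ring
        rw [heq]
        have hterm : ∀ k : ℕ, ‖a k * ζ ^ (1 + 1 + k)‖ ≤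
            (M * (‖ζ‖ / ‖w‖) ^ 2) * (1/2) ^ k := by
          intro k
          calc ‖a k * ζ ^ (1 + 1 + k)‖ = ‖a k‖ * ‖ζ‖ ^ (1 + 1 + k) := by
                rw [norm_mul, norm_pow]
            _ = (‖a k‖ * ‖w‖ ^ (1 + 1 + k)) * (‖ζ‖ / ‖w‖) ^ (1 + 1 + k) := by
                have hcan : ‖w‖ * (‖ζ‖ / ‖w‖) = ‖ζ‖ := by
                  rw [mul_comm, div_mul_cancel₀ _ hwpos.ne']
                rw [mul_assoc, ← mul_pow, hcan]
            _ ≤ M * (‖ζ‖ / ‖w‖) ^ (1 + 1 + k) := by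
                have hMk' := hMk k
                gcongr
            _ = M * ((‖ζ‖ / ‖w‖) ^ 2 * (‖ζ‖ / ‖w‖) ^ k) := by rw [pow_add]
            _ ≤ M * ((‖ζ‖ / ‖w‖) ^ 2 * (1/2) ^ k) := by
                gcongr
            _ = (M * (‖ζ‖ / ‖w‖) ^ 2) * (1/2) ^ k := by ring
        have hgeom : HasSum (fun k : ℕ => (M * (‖ζ‖ / ‖w‖) ^ 2) * (1/2) ^ k)
            ((M * (‖ζ‖ / ‖w‖) ^ 2) * 2) := hasSum_geometric_two.mul_left _
        have := tsum_of_norm_bounded hgeom hterm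
        calc ‖∑' k, a k * ζ ^ (1 + 1 + k)‖ ≤ (M * (‖ζ‖ / ‖w‖) ^ 2) * 2 := this
          _ = (2 * M / ‖w‖ ^ 2) * ‖ζ‖ ^ 2 := by
              rw [div_pow]; field_simp
      rw [hasDerivAt_iff_isLittleO]
      simp only [sub_zero, smul_zero, h0]
      rw [Asymptotics.isLittleO_iff]
      intro c hc
      set K : ℝ := 2 * M / ‖w‖ ^ 2 with hK
      have hK0 : 0 ≤ K := by positivity
      have hδ : (0:ℝ) < min (min (‖w‖ / 2) (1/2)) (c / (K + 1)) := by
        refine lt_min (lt_min (by positivity) (by norm_num)) (by positivity)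
      filter_upwards [Metric.ball_mem_nhds (0:ℂ) hδ] with ζ hζ
      rw [mem_ball, dist_zero_right] at hζ
      have h1 : ‖ζ‖ ≤ ‖w‖ / 2 :=
        le_of_lt (lt_of_lt_of_le hζ (le_trans (min_le_left _ _) (min_le_left _ _)))
      have h2 : ‖ζ‖ < 1 :=
        lt_of_lt_of_le hζ (le_trans (le_trans (min_le_left _ _) (min_le_right _ _)) (by norm_num))
      have h3 : ‖ζ‖ ≤ c / (K + 1) := le_of_lt (lt_of_lt_of_le hζ (min_le_right _ _))
      have hb' := hb ζ h1 h2
      have : K * ‖ζ‖ ≤ c := by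
        have h4 : K * ‖ζ‖ ≤ K * (c / (K + 1)) := by gcongr
        have h5 : K * (c / (K + 1)) ≤ c := by
          rw [div_eq_mul_inv]
          rw [show K * (c * (K+1)⁻¹) = (K * c) * (K+1)⁻¹ by ring]
          rw [mul_inv_le_iff₀ (by positivity)]
          nlinarith
        linarith
      calc ‖f ζ - ζ‖ ≤ K * ‖ζ‖ ^ 2 := hb'
        _ = (K * ‖ζ‖) * ‖ζ‖ := by ring
        _ ≤ c * ‖ζ‖ := by
            have := norm_nonneg ζ
            nlinarith
        _ = c * ‖id ζ‖ := rfl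
    · push_neg at hs
      have hev : ∀ᶠ ζ : ℂ in 𝓝 0, f ζ - ζ = 0 := by
        filter_upwards [ball_mem_nhds (0:ℂ) one_pos] with ζ hζ
        rcases eq_or_ne ζ 0 with rfl | hζ0
        · simp [h0]
        · have hns := hs ζ hζ hζ0
          have := h ζ hζ
          rw [tsum_eq_zero_of_not_summable hns] at this
          rw [this]; ring
      have hc : HasDerivAt (fun _ : ℂ => (0:ℂ)) 0 0 := hasDerivAt_const 0 0
      exact hc.congr_of_eventuallyEq hev
  have h2 : HasDerivAt (fun ζ : ℂ => (f ζ - ζ) + ζ) (0 + 1) 0 := key.add (hasDerivAt_id 0)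
  refine ⟨h0, ?_⟩
  simpa using h2

theorem stmt_17 (f : ℂ → ℂ) (hf : MemOmega 1 f) (z : ℂ) (hz0 : 0 < ‖z‖)
    (hz : ‖z‖ < 2 * (1 - (Real.exp 1)⁻¹) / (2 - (Real.exp 1)⁻¹)) :
    f z ≠ 0 ∧ ‖Complex.log (z * deriv f z / f z)‖ < 1 := by
  obtain ⟨⟨hdiff, a, hser⟩, hw⟩ := hf
  simp only [unitDisc] at hdiff hser hw
  have hA : AnalyticOnNhd ℂ f (ball 0 1) := hdiff.analyticOnNhd isOpen_ball
  obtain ⟨h0, hd1⟩ := aux_deriv f a hser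
  have he : (0:ℝ) < (Real.exp 1)⁻¹ := inv_pos.mpr (Real.exp_pos 1)
  have hexp : (1:ℝ) < Real.exp 1 := by
    have := Real.exp_one_gt_d9; linarith
  have he1 : (Real.exp 1)⁻¹ < 1 := by
    rw [inv_lt_one_iff₀]; right; exact hexp
  have hz1 : ‖z‖ < 1 := by
    refine hz.trans_le ?_
    rw [div_le_one (by linarith)]
    linarith
  have hzD : z ∈ ball (0:ℂ) 1 := by simpa [mem_ball, dist_zero_right] using hz1
  have hz0' : z ≠ 0 := norm_pos_iff.mp hz0
  -- the function W
  have hWd : DifferentiableOn ℂ (fun ζ : ℂ => ζ * deriv f ζ - f ζ) (ball 0 1) :=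
    (differentiableOn_id.mul (hA.deriv.differentiableOn)).sub hdiff
  have hW0 : (0:ℂ) * deriv f 0 - f 0 = 0 := by simp [h0]
  have hWderiv0 : deriv (fun ζ : ℂ => ζ * deriv f ζ - f ζ) 0 = 0 := by
    have hf0 : HasDerivAt f (deriv f 0) 0 :=
      ((hA 0 (mem_ball_self one_pos)).differentiableAt).hasDerivAt
    have hdf : HasDerivAt (deriv f) (deriv (deriv f) 0) 0 :=
      ((hA.deriv 0 (mem_ball_self one_pos)).differentiableAt).hasDerivAt
    have h1 : HasDerivAt (fun ζ : ℂ => ζ * deriv f ζ)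
        (1 * deriv f 0 + 0 * deriv (deriv f) 0) 0 := (hasDerivAt_id 0).mul hdf
    have h2 : HasDerivAt (fun ζ : ℂ => ζ * deriv f ζ - f ζ)
        (1 * deriv f 0 + 0 * deriv (deriv f) 0 - deriv f 0) 0 := h1.sub hf0
    rw [h2.deriv]; ring
  have hmaps : Set.MapsTo (fun ζ : ℂ => ζ * deriv f ζ - f ζ) (ball 0 1)
      (ball ((fun ζ : ℂ => ζ * deriv f ζ - f ζ) 0) (1/2)) := by
    intro ζ hζ
    simp only [hW0, mem_ball, dist_zero_right]
    exact hw ζ hζ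
  have hg : ∀ ζ ∈ ball (0:ℂ) 1, ‖dslope (fun ζ : ℂ => ζ * deriv f ζ - f ζ) 0 ζ‖ ≤ 1/2 := by
    intro ζ hζ
    have := Complex.norm_dslope_le_div_of_mapsTo_ball hWd (hmaps.mono_right ball_subset_closedBall) hζ
    simpa using this
  have hGd : DifferentiableOn ℂ (dslope (fun ζ : ℂ => ζ * deriv f ζ - f ζ) 0) (ball 0 1) :=
    (Complex.differentiableOn_dslope (ball_mem_nhds _ one_pos)).mpr hWd
  have hG2 : ∀ ζ ∈ ball (0:ℂ) 1,
      ‖dslope (dslope (fun ζ : ℂ => ζ * deriv f ζ - f ζ) 0) 0 ζ‖ ≤ 1/2 := by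
    intro ζ hζ
    refine le_of_forall_pos_le_add fun ε hε => ?_
    have hmaps2 : Set.MapsTo (dslope (fun ζ : ℂ => ζ * deriv f ζ - f ζ) 0) (ball 0 1)
        (ball ((dslope (fun ζ : ℂ => ζ * deriv f ζ - f ζ) 0) 0) (1/2 + ε)) := by
      intro x hx
      simp only [dslope_same, hWderiv0, mem_ball, dist_zero_right]
      exact lt_of_le_of_lt (hg x hx) (by linarith)
    have := Complex.norm_dslope_le_div_of_mapsTo_ball hGd (hmaps2.mono_right ball_subset_closedBall) hζ
    simpa using this
  have hWb : ∀ ζ ∈ ball (0:ℂ) 1, ‖ζ * deriv f ζ - f ζ‖ ≤ 1/2 * ‖ζ‖^2 := by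
    intro ζ hζ
    rcases eq_or_ne ζ 0 with rfl | hζ0
    · simp [h0]
    · have h2 := hG2 ζ hζ
      simp only [dslope_of_ne _ hζ0, slope_def_module, dslope_same, hWderiv0, hW0,
        sub_zero, smul_eq_mul] at h2
      rw [norm_mul, norm_mul, norm_inv] at h2
      have hζn : (0:ℝ) < ‖ζ‖ := norm_pos_iff.mpr hζ0
      have := mul_le_mul_of_nonneg_right h2 (sq_nonneg ‖ζ‖)
      have hne : ‖ζ‖ ≠ 0 := hζn.ne'
      calc ‖ζ * deriv f ζ - f ζ‖
          = (‖ζ‖⁻¹ * ‖ζ‖) * (‖ζ‖⁻¹ * ‖ζ‖) * ‖ζ * deriv f ζ - f ζ‖ := by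
            rw [inv_mul_cancel₀ hne]; ring
        _ = ‖ζ‖⁻¹ * (‖ζ‖⁻¹ * ‖ζ * deriv f ζ - f ζ‖) * ‖ζ‖^2 := by ring
        _ ≤ 1/2 * ‖ζ‖^2 := this
  -- the function dslope f 0
  have hPd : DifferentiableOn ℂ (dslope f 0) (ball 0 1) :=
    (Complex.differentiableOn_dslope (ball_mem_nhds _ one_pos)).mpr hdiff
  have hPA : AnalyticOnNhd ℂ (dslope f 0) (ball 0 1) := hPd.analyticOnNhd isOpen_ball
  have hP0 : dslope f 0 0 = 1 := by rw [dslope_same, hd1.deriv]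
  have hPderiv : ∀ ζ ∈ ball (0:ℂ) 1, ζ ≠ 0 →
      HasDerivAt (dslope f 0) ((ζ * deriv f ζ - f ζ) * (ζ^2)⁻¹) ζ := by
    intro ζ hζ hζ0
    have h1 : HasDerivAt (fun x : ℂ => f x * x⁻¹)
        (deriv f ζ * ζ⁻¹ + f ζ * (-(ζ^2)⁻¹)) ζ :=
      (((hA ζ hζ).differentiableAt).hasDerivAt).mul (hasDerivAt_inv hζ0)
    have heq : (fun x : ℂ => f x * x⁻¹) =ᶠ[𝓝 ζ] dslope f 0 := by
      filter_upwards [isOpen_ne.mem_nhds hζ0] with x hx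
      rw [dslope_of_ne _ hx, slope_def_module, h0, sub_zero, sub_zero, smul_eq_mul]
      ring
    have h2 := h1.congr_of_eventuallyEq heq.symm
    have e : (ζ * deriv f ζ - f ζ) * (ζ^2)⁻¹ = deriv f ζ * ζ⁻¹ + f ζ * (-(ζ^2)⁻¹) := by
      field_simp
      ring
    rw [e]
    exact h2
  have hbound_ne : ∀ ζ ∈ ball (0:ℂ) 1, ζ ≠ 0 → ‖deriv (dslope f 0) ζ‖ ≤ 1/2 := by
    intro ζ hζ hζ0
    rw [(hPderiv ζ hζ hζ0).deriv, norm_mul, norm_inv, norm_pow]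
    have hζn : (0:ℝ) < ‖ζ‖ := norm_pos_iff.mpr hζ0
    calc ‖ζ * deriv f ζ - f ζ‖ * (‖ζ‖^2)⁻¹ ≤ (1/2 * ‖ζ‖^2) * (‖ζ‖^2)⁻¹ := by
          gcongr
          exact hWb ζ hζ
      _ = 1/2 := by
          rw [mul_assoc, mul_inv_cancel₀ (pow_ne_zero 2 hζn.ne'), mul_one]
  have hPderivBound : ∀ ζ ∈ ball (0:ℂ) 1, ‖deriv (dslope f 0) ζ‖ ≤ 1/2 := by
    intro ζ hζ
    rcases eq_or_ne ζ 0 with rfl | hζ0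
    · have hcont : ContinuousAt (deriv (dslope f 0)) 0 :=
        (hPA.deriv.continuousOn).continuousAt (isOpen_ball.mem_nhds (mem_ball_self one_pos))
      have h1 : Filter.Tendsto (fun x => ‖deriv (dslope f 0) x‖) (𝓝[≠] (0:ℂ))
          (𝓝 ‖deriv (dslope f 0) 0‖) :=
        (hcont.norm.tendsto).mono_left nhdsWithin_le_nhds
      refine le_of_tendsto h1 ?_
      have hballmem : ball (0:ℂ) 1 ∈ 𝓝[≠] (0:ℂ) :=
        mem_nhdsWithin_of_mem_nhds (isOpen_ball.mem_nhds (mem_ball_self one_pos))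
      filter_upwards [hballmem, self_mem_nhdsWithin] with x hx hx0
      exact hbound_ne x hx (by simpa using hx0)
    · exact hbound_ne ζ hζ hζ0
  -- mean value inequality
  have hPz : ‖dslope f 0 z - 1‖ ≤ ‖z‖/2 := by
    have hseg : ∀ t ∈ Set.Icc (0:ℝ) 1,
        HasDerivWithinAt (fun t : ℝ => dslope f 0 (↑t * z))
          (z * deriv (dslope f 0) (↑t * z)) (Set.Icc 0 1) t := by
      intro t ht
      obtain ⟨ht0, ht1⟩ := ht
      have htz : ((t:ℂ) * z) ∈ ball (0:ℂ) 1 := by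
        rw [mem_ball, dist_zero_right, norm_mul, Complex.norm_real, Real.norm_eq_abs,
          _root_.abs_of_nonneg ht0]
        nlinarith [norm_nonneg z]
      have hd : HasDerivAt (dslope f 0) (deriv (dslope f 0) ((t:ℂ)*z)) ((t:ℂ)*z) :=
        ((hPA ((t:ℂ)*z) htz).differentiableAt).hasDerivAt
      have hc : HasDerivAt (fun s : ℝ => ((s:ℂ) * z)) z t := by
        have hmc : HasDerivAt (fun s : ℂ => s * z) z (↑t:ℂ) := by
          simpa using (hasDerivAt_id ((t:ℂ))).mul_const z
        exact hmc.comp_ofReal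
      have := HasDerivAt.scomp t hd hc
      have h3 : HasDerivAt (fun s : ℝ => dslope f 0 ((s:ℂ) * z))
          (z * deriv (dslope f 0) ((t:ℂ)*z)) t := by
        exact this
      exact h3.hasDerivWithinAt
    have hbd : ∀ t ∈ Set.Ico (0:ℝ) 1, ‖z * deriv (dslope f 0) (↑t * z)‖ ≤ ‖z‖/2 := by
      intro t ht
      obtain ⟨ht0, ht1⟩ := ht
      have htz : ((t:ℂ) * z) ∈ ball (0:ℂ) 1 := by
        rw [mem_ball, dist_zero_right, norm_mul, Complex.norm_real, Real.norm_eq_abs,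
          _root_.abs_of_nonneg ht0]
        nlinarith [norm_nonneg z]
      rw [norm_mul]
      calc ‖z‖ * ‖deriv (dslope f 0) ((t:ℂ)*z)‖ ≤ ‖z‖ * (1/2) := by
            gcongr
            exact hPderivBound _ htz
        _ = ‖z‖/2 := by ring
    have := norm_image_sub_le_of_norm_deriv_le_segment' hseg hbd 1
      (Set.right_mem_Icc.mpr zero_le_one)
    simpa [hP0, hd1.deriv] using this
  have hfz : f z = z * dslope f 0 z := by
    rw [dslope_of_ne _ hz0', slope_def_module, h0, sub_zero, sub_zero, smul_eq_mul]
    field_simp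
  have hPz_norm : 1 - ‖z‖/2 ≤ ‖dslope f 0 z‖ := by
    have hns := norm_sub_norm_le (1:ℂ) (dslope f 0 z)
    rw [norm_one, norm_sub_rev] at hns
    linarith
  have hfz0 : f z ≠ 0 := by
    rw [hfz]
    refine mul_ne_zero hz0' (fun hP => ?_)
    rw [hP] at hPz
    simp only [zero_sub, norm_neg, norm_one] at hPz
    linarith
  refine ⟨hfz0, ?_⟩
  have hrat : z * deriv f z / f z = 1 + (z * deriv f z - f z) / f z := by
    field_simp
    ring
  have hfznorm : ‖f z‖ = ‖z‖ * ‖dslope f 0 z‖ := by rw [hfz, norm_mul]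
  have hWz := hWb z hzD
  have hfzpos : (0:ℝ) < ‖f z‖ := norm_pos_iff.mpr hfz0
  have hu_norm : ‖(z * deriv f z - f z) / f z‖ < 1 - (Real.exp 1)⁻¹ := by
    rw [norm_div, div_lt_iff₀ hfzpos]
    have h1 : ‖z‖ * (1 - ‖z‖/2) ≤ ‖f z‖ := by
      rw [hfznorm]
      gcongr
    have h2 : ‖z‖ * (2 - (Real.exp 1)⁻¹) < 2 * (1 - (Real.exp 1)⁻¹) :=
      (lt_div_iff₀ (by linarith)).mp hz
    nlinarith [hWz, hz0, he, he1, hz1, norm_nonneg (z * deriv f z - f z)]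
  rw [hrat]
  exact aux_log_lt_one hu_norm
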